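/- Let ν be a probability measure on Ω = ℤ^ℤ (with the product σ-algebra) that is invariant and ergodic under the spatial shift S defined by S(φ)_i = φ_{i+1}, and suppose φ ↦ φ_0 is ν-integrable. Then for every nonzero t ∈ ℤ, ν is NOT absolutely continuous with respect to the pushforward measure ν_t of ν under the height shift T_t (defined by T_t(φ)_i = φ_i + t). -/

import Mathlib

open MeasureTheory Filter

/-- The configuration space `Ω = ℤ^ℤ`, carrying the product σ-algebra. -/
abbrev Conf : Type := ℤ → ℤ

/-- The spatial shift `S(φ)_i = φ_{i+1}`. -/
def spatialShift : Conf → Conf := fun φ i => φ (i + 1)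

/-- The height shift `T_t(φ)_i = φ_i + t`. -/
def heightShift (t : ℤ) : Conf → Conf := fun φ i => φ i + t

open Topology

set_option linter.unusedSectionVars false
set_option linter.unusedVariables false
set_option maxHeartbeats 1000000

lemma measurable_spatialShift : Measurable spatialShift :=
  measurable_pi_lambda _ fun i => measurable_pi_apply (i + 1)

lemma measurable_heightShift (t : ℤ) : Measurable (heightShift t) :=
  measurable_pi_lambda _ fun i => (measurable_pi_apply i).add_const (M := ℤ) t

lemma spatialShift_iterate (n : ℕ) (φ : Conf) (j : ℤ) :
    (spatialShift^[n] φ) j = φ (j + n) := by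
  induction n generalizing φ j with
  | zero => simp
  | succ n ih =>
      rw [Function.iterate_succ_apply, ih]
      simp [spatialShift]
      ring_nf

section liminfHelpers

lemma bddge {u : ℕ → ℝ} (h : ∀ n, (0:ℝ) ≤ u n) : IsBoundedUnder (· ≥ ·) atTop u :=
  isBoundedUnder_of ⟨0, fun n => h n⟩

lemma bddle {u : ℕ → ℝ} (h : ∀ n, u n ≤ (1:ℝ)) : IsBoundedUnder (· ≤ ·) atTop u :=
  isBoundedUnder_of ⟨1, fun n => h n⟩

lemma liminf_le_liminf_add_eps {u v : ℕ → ℝ}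
    (hu0 : ∀ n, (0:ℝ) ≤ u n) (hv0 : ∀ n, (0:ℝ) ≤ v n) (hv1 : ∀ n, v n ≤ 1)
    {ε : ℝ} (h : ∀ᶠ n in atTop, u n ≤ v n + ε) :
    liminf u atTop ≤ liminf v atTop + ε := by
  have h1 : liminf u atTop ≤ liminf (fun n => v n + ε) atTop := by
    refine liminf_le_liminf h (bddge hu0) ?_
    exact (isBoundedUnder_of ⟨1 + ε, fun n => by have := hv1 n; linarith⟩ :
      IsBoundedUnder (· ≤ ·) atTop fun n => v n + ε).isCoboundedUnder_ge
  refine h1.trans ?_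
  have h2 := liminf_add_le (f := atTop) (u := fun _ : ℕ => ε) (v := v)
    (isBoundedUnder_of ⟨ε, fun _ => le_refl ε⟩)
    (isBoundedUnder_of ⟨ε, fun _ => le_refl ε⟩)
    (bddge hv0) ((bddle hv1).isCoboundedUnder_ge)
  have h3 : liminf (fun n => v n + ε) atTop = liminf ((fun _ : ℕ => ε) + v) atTop := by
    congr 1; ext n; simp [add_comm]
  rw [h3]
  calc liminf ((fun _ : ℕ => ε) + v) atTop ≤ limsup (fun _ : ℕ => ε) atTop + liminf v atTop := h2
    _ = ε + liminf v atTop := by rw [limsup_const]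
    _ = liminf v atTop + ε := by ring

lemma liminf_eq_liminf_of_tendsto_sub {u v : ℕ → ℝ}
    (hu0 : ∀ n, (0:ℝ) ≤ u n) (hu1 : ∀ n, u n ≤ 1)
    (hv0 : ∀ n, (0:ℝ) ≤ v n) (hv1 : ∀ n, v n ≤ 1)
    (hd : Filter.Tendsto (fun n => u n - v n) atTop (nhds 0)) :
    liminf u atTop = liminf v atTop := by
  have key : ∀ ε : ℝ, 0 < ε → |liminf u atTop - liminf v atTop| ≤ ε := by
    intro ε hε
    have hev := (Metric.tendsto_nhds.1 hd ε hε)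
    rw [abs_sub_le_iff]
    constructor
    · have := liminf_le_liminf_add_eps hu0 hv0 hv1 (ε := ε)
        (hev.mono fun n hn => by
          have : |u n - v n| < ε := by simpa [Real.dist_eq] using hn
          linarith [abs_le.1 this.le |>.2])
      linarith
    · have := liminf_le_liminf_add_eps hv0 hu0 hu1 (ε := ε)
        (hev.mono fun n hn => by
          have : |u n - v n| < ε := by simpa [Real.dist_eq] using hn
          linarith [abs_le.1 this.le |>.1])
      linarith
  have h0 : |liminf u atTop - liminf v atTop| ≤ 0 := by
    by_contra hc
    push_neg at hc
    have := key (|liminf u atTop - liminf v atTop| / 2) (by linarith)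
    linarith
  have h1 := abs_nonneg (liminf u atTop - liminf v atTop)
  exact sub_eq_zero.1 (abs_eq_zero.1 (le_antisymm h0 h1))

lemma liminf_add_liminf_le {u v : ℕ → ℝ}
    (hu0 : ∀ n, (0:ℝ) ≤ u n) (hu1 : ∀ n, u n ≤ 1)
    (hv0 : ∀ n, (0:ℝ) ≤ v n) (hv1 : ∀ n, v n ≤ 1) :
    liminf u atTop + liminf v atTop ≤ liminf (fun n => u n + v n) atTop := by
  have := le_liminf_add (f := atTop) (u := u) (v := v)
    (bddge hu0) (bddle hu1) (bddge hv0) ((bddle hv1).isCoboundedUnder_ge)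
  simpa [Pi.add_def] using this

end liminfHelpers


section maximal
variable {α : Type*} [MeasurableSpace α]

/-- `maxSum T g N x = max (0, S₁ x, ..., S_N x)` where `S_k` is the Birkhoff sum. -/
def maxSum (T : α → α) (g : α → ℝ) : ℕ → α → ℝ
  | 0 => fun _ => 0
  | (N+1) => fun x => max (maxSum T g N x) (birkhoffSum T g (N+1) x)

variable {T : α → α} {g : α → ℝ}

lemma maxSum_nonneg (N : ℕ) (x : α) : 0 ≤ maxSum T g N x := by
  induction N with
  | zero => simp [maxSum]
  | succ N ih => exact le_trans ih (le_max_left _ _)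

lemma maxSum_mono {N M : ℕ} (h : N ≤ M) (x : α) : maxSum T g N x ≤ maxSum T g M x := by
  induction M with
  | zero => simp_all
  | succ M ih =>
      rcases Nat.lt_or_ge N (M+1) with h' | h'
      · exact le_trans (ih (Nat.lt_succ_iff.1 h')) (le_max_left _ _)
      · have : N = M + 1 := le_antisymm h h'
        simp [this]

lemma birkhoffSum_le_maxSum {k N : ℕ} (h : k ≤ N) (hk : 1 ≤ k) (x : α) :
    birkhoffSum T g k x ≤ maxSum T g N x := by
  induction N with
  | zero => omega
  | succ N ih =>
      rcases Nat.lt_or_ge k (N+1) with h' | h'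
      · exact le_trans (ih (Nat.lt_succ_iff.1 h')) (maxSum_mono (Nat.le_succ N) x)
      · have : k = N + 1 := le_antisymm h h'
        subst this
        exact le_max_right _ _

lemma measurable_maxSum (hT : Measurable T) (hg : Measurable g) (N : ℕ) :
    Measurable (maxSum T g N) := by
  induction N with
  | zero => simpa [maxSum] using measurable_const
  | succ N ih =>
      refine ih.max ?_
      unfold birkhoffSum
      exact Finset.measurable_sum _ (fun i _ => hg.comp (hT.iterate i))

lemma maxSum_le_bound {C : ℝ} (hC : 0 ≤ C) (hg : ∀ x, |g x| ≤ C) (N : ℕ) (x : α) :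
    maxSum T g N x ≤ N * C := by
  induction N with
  | zero => simp [maxSum]
  | succ N ih =>
      refine max_le (le_trans ih (by push_cast; nlinarith)) ?_
      calc birkhoffSum T g (N+1) x ≤ |birkhoffSum T g (N+1) x| := le_abs_self _
        _ ≤ ∑ i ∈ Finset.range (N+1), |g (T^[i] x)| := by
              unfold birkhoffSum; exact Finset.abs_sum_le_sum_abs _ _
        _ ≤ ∑ i ∈ Finset.range (N+1), C := Finset.sum_le_sum fun i _ => hg _
        _ = (N+1) * C := by simp [mul_comm]
        _ = (↑(N+1)) * C := by push_cast; ring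

lemma maxSum_succ_le (N : ℕ) (x : α) :
    maxSum T g (N+1) x ≤ max 0 (g x + maxSum T g N (T x)) := by
  induction N with
  | zero =>
      simp only [maxSum, birkhoffSum_one]
      exact max_le (le_max_left _ _) (le_max_of_le_right (by simp [maxSum]))
  | succ N ih =>
      show max (maxSum T g (N+1) x) (birkhoffSum T g (N+2) x) ≤ _
      refine max_le (le_trans ih ?_) ?_
      · exact max_le_max (le_refl 0)
          (by linarith [maxSum_mono (T := T) (g := g) (Nat.le_succ N) (T x)])
      · refine le_max_of_le_right ?_
        rw [birkhoffSum_succ']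
        have : birkhoffSum T g (N+1) (T x) ≤ maxSum T g (N+1) (T x) :=
          birkhoffSum_le_maxSum (le_refl _) (by omega) (T x)
        linarith



lemma integrable_of_abs_bound {μ : Measure α} [IsFiniteMeasure μ] {f : α → ℝ}
    (hm : Measurable f) {C : ℝ} (hC : ∀ x, |f x| ≤ C) : Integrable f μ :=
  Integrable.mono' (integrable_const C) hm.aestronglyMeasurable
    (Filter.Eventually.of_forall (fun x => by simpa [Real.norm_eq_abs] using hC x))

lemma maximal_inequality {μ : Measure α} [IsProbabilityMeasure μ] {T : α → α} {g : α → ℝ}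
    (hT : MeasurePreserving T μ μ) (hg : Measurable g) {C : ℝ} (hC : ∀ x, |g x| ≤ C)
    (N : ℕ) : 0 ≤ ∫ x in {x | 0 < maxSum T g N x}, g x ∂μ := by
  set M := maxSum T g N with hM
  set E := {x | 0 < M x} with hE
  have hTm := hT.measurable
  have hMm : Measurable M := measurable_maxSum hTm hg N
  have hEm : MeasurableSet E := measurableSet_lt measurable_const hMm
  have hC' : ∀ x, |g x| ≤ |C| := fun x => (hC x).trans (le_abs_self C)
  have hgint : Integrable g μ := integrable_of_abs_bound hg hC'
  have hMbb : ∀ x, |M x| ≤ N * |C| := fun x => by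
    rw [abs_of_nonneg (maxSum_nonneg N x)]
    exact maxSum_le_bound (abs_nonneg C) hC' N x
  have hMint : Integrable M μ := integrable_of_abs_bound hMm hMbb
  have hMTm : Measurable (fun x => M (T x)) := hMm.comp hTm
  have hMTint : Integrable (fun x => M (T x)) μ :=
    integrable_of_abs_bound hMTm (fun x => hMbb (T x))
  have key : ∀ x ∈ E, M x - M (T x) ≤ g x := by
    intro x hx
    have hx' : 0 < M x := hx
    cases N with
    | zero => simp [hM, maxSum] at hx'
    | succ N' =>
        have h1 : M x ≤ max 0 (g x + maxSum T g N' (T x)) := maxSum_succ_le N' x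
        have h2 : maxSum T g N' (T x) ≤ M (T x) :=
          maxSum_mono (T := T) (g := g) (Nat.le_succ N') (T x)
        rcases le_or_gt 0 (g x + M (T x)) with h | h
        · have : M x ≤ max 0 (g x + M (T x)) := h1.trans (max_le_max le_rfl (by linarith))
          rw [max_eq_right h] at this
          linarith
        · have : M x ≤ max 0 (g x + M (T x)) := h1.trans (max_le_max le_rfl (by linarith))
          rw [max_eq_left h.le] at this
          linarith
  have h1 : ∫ x in E, (M x - M (T x)) ∂μ ≤ ∫ x in E, g x ∂μ :=
    setIntegral_mono_on ((hMint.sub hMTint).integrableOn) hgint.integrableOn hEm key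
  have h2 : ∫ x in E, (M x - M (T x)) ∂μ = ∫ x in E, M x ∂μ - ∫ x in E, M (T x) ∂μ :=
    integral_sub hMint.integrableOn hMTint.integrableOn
  have h3 : ∫ x in E, M x ∂μ = ∫ x, M x ∂μ := by
    have hcz : ∫ x in Eᶜ, M x ∂μ = 0 := by
      have : Set.EqOn M (fun _ => (0:ℝ)) Eᶜ := by
        intro x hx
        simp only [hE, Set.mem_compl_iff, Set.mem_setOf_eq, not_lt] at hx
        exact le_antisymm hx (maxSum_nonneg N x)
      rw [setIntegral_congr_fun hEm.compl this]
      simp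
    rw [← integral_add_compl hEm hMint, hcz, add_zero]
  have h4 : ∫ x in E, M (T x) ∂μ ≤ ∫ x, M (T x) ∂μ :=
    setIntegral_le_integral hMTint (Filter.Eventually.of_forall fun x => maxSum_nonneg N (T x))
  have h5 : ∫ x, M (T x) ∂μ = ∫ x, M x ∂μ := by
    have := integral_map (μ := μ) (φ := T) (f := M) hTm.aemeasurable hMm.aestronglyMeasurable
    rw [hT.map_eq] at this
    exact this.symm
  linarith

end maximal


section birkhoff
variable {α : Type*} [MeasurableSpace α]

lemma birkhoffSum_nonneg {T : α → α} {f : α → ℝ} (hf0 : ∀ x, 0 ≤ f x) (n : ℕ) (x : α) :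
    0 ≤ birkhoffSum T f n x :=
  Finset.sum_nonneg fun i _ => hf0 _

lemma birkhoffSum_le_card {T : α → α} {f : α → ℝ} (hf1 : ∀ x, f x ≤ 1) (n : ℕ) (x : α) :
    birkhoffSum T f n x ≤ n := by
  calc birkhoffSum T f n x ≤ ∑ i ∈ Finset.range n, 1 := Finset.sum_le_sum fun i _ => hf1 _
    _ = n := by simp

lemma avg_nonneg {T : α → α} {f : α → ℝ} (hf0 : ∀ x, 0 ≤ f x) (n : ℕ) (x : α) :
    0 ≤ birkhoffSum T f n x / n :=
  div_nonneg (birkhoffSum_nonneg hf0 n x) (Nat.cast_nonneg n)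

lemma avg_le_one {T : α → α} {f : α → ℝ} (hf0 : ∀ x, 0 ≤ f x) (hf1 : ∀ x, f x ≤ 1)
    (n : ℕ) (x : α) : birkhoffSum T f n x / n ≤ 1 := by
  rcases Nat.eq_zero_or_pos n with rfl | hn
  · simp [birkhoffSum]
  · rw [div_le_one (by exact_mod_cast hn)]
    exact birkhoffSum_le_card hf1 n x

lemma measurable_avg {T : α → α} {f : α → ℝ} (hT : Measurable T) (hf : Measurable f) (n : ℕ) :
    Measurable (fun x => birkhoffSum T f n x / n) := by
  apply Measurable.div_const
  unfold birkhoffSum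
  exact Finset.measurable_sum _ (fun i _ => hf.comp (hT.iterate i))

lemma ergodic_liminf_lt_null {μ : Measure α} [IsProbabilityMeasure μ] {T : α → α}
    (herg : Ergodic T μ) {f : α → ℝ} (hfm : Measurable f)
    (hf0 : ∀ x, 0 ≤ f x) (hf1 : ∀ x, f x ≤ 1) {lam : ℝ} (hlam : lam < ∫ y, f y ∂μ) :
    μ {x | liminf (fun n => birkhoffSum T f n x / n) atTop < lam} = 0 := by
  have hTm : Measurable T := herg.toMeasurePreserving.measurable
  set L : α → ℝ := fun x => liminf (fun n => birkhoffSum T f n x / n) atTop with hLdef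
  set B : Set α := {x | L x < lam} with hBdef
  have hLT : ∀ x, L (T x) = L x := by
    intro x
    refine liminf_eq_liminf_of_tendsto_sub
      (fun n => avg_nonneg hf0 n (T x)) (fun n => avg_le_one hf0 hf1 n (T x))
      (fun n => avg_nonneg hf0 n x) (fun n => avg_le_one hf0 hf1 n x) ?_
    have heq : ∀ n : ℕ, birkhoffSum T f n (T x) / n - birkhoffSum T f n x / n
        = (f (T^[n] x) - f x) / n := by
      intro n
      rw [div_sub_div_same, birkhoffSum_apply_sub_birkhoffSum]
    refine squeeze_zero_norm' (a := fun n : ℕ => 1 / (n:ℝ)) ?_ tendsto_one_div_atTop_nhds_zero_nat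
    filter_upwards [eventually_ge_atTop 1] with n hn
    rw [heq n, Real.norm_eq_abs, abs_div, abs_of_nonneg (by positivity : (0:ℝ) ≤ (n:ℝ)),
      div_le_div_iff₀ (by exact_mod_cast hn) (by exact_mod_cast hn)]
    have h1 : |f (T^[n] x) - f x| ≤ 1 := by
      rw [abs_le]
      constructor
      · linarith [hf0 (T^[n] x), hf1 x]
      · linarith [hf1 (T^[n] x), hf0 x]
    nlinarith [(by exact_mod_cast hn : (1:ℝ) ≤ (n:ℝ))]
  have hBinv : T ⁻¹' B = B := by
    ext x
    simp only [hBdef, Set.mem_preimage, Set.mem_setOf_eq, hLT x]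
  have hLm : Measurable L :=
    Measurable.liminf (fun n => measurable_avg hTm hfm n)
  have hBm : MeasurableSet B := measurableSet_lt hLm measurable_const
  rcases herg.toPreErgodic.ae_empty_or_univ hBm hBinv with h | h
  · exact ae_eq_empty.1 h
  -- case B =ᵐ univ: derive a contradiction
  exfalso
  set g : α → ℝ := fun y => lam - f y with hgdef
  have hgm : Measurable g := measurable_const.sub hfm
  have hgb : ∀ x, |g x| ≤ |lam| + 1 := by
    intro x
    rw [abs_le]
    constructor
    · have := hf1 x; have := neg_abs_le lam; simp only [hgdef]; linarith
    · have := hf0 x; have := le_abs_self lam; simp only [hgdef]; linarith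
  set E : ℕ → Set α := fun N => {x | 0 < maxSum T g N x} with hEdef
  have hEm : ∀ N, MeasurableSet (E N) :=
    fun N => measurableSet_lt measurable_const (measurable_maxSum hTm hgm N)
  have hEmono : Monotone E := by
    intro N M hNM x hx
    exact lt_of_lt_of_le hx (maxSum_mono hNM x)
  have hsub : B ⊆ ⋃ N, E N := by
    intro x hx
    have hcob : IsCoboundedUnder (· ≥ ·) atTop (fun n => birkhoffSum T f n x / n) :=
      (bddle (fun n => avg_le_one hf0 hf1 n x)).isCoboundedUnder_ge
    have hfreq : ∃ᶠ n in atTop, birkhoffSum T f n x / n < lam :=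
      frequently_lt_of_liminf_lt hcob hx
    obtain ⟨n, hn1, hnlt⟩ := (frequently_atTop.1 hfreq) 1
    have hnp : (0:ℝ) < n := by exact_mod_cast hn1
    have hS : birkhoffSum T f n x < lam * n := by
      rwa [div_lt_iff₀ hnp] at hnlt
    have hbg : birkhoffSum T g n x = n * lam - birkhoffSum T f n x := by
      simp only [hgdef, birkhoffSum, Finset.sum_sub_distrib, Finset.sum_const,
        Finset.card_range, nsmul_eq_mul]
    have hpos : 0 < birkhoffSum T g n x := by
      rw [hbg]; nlinarith
    exact Set.mem_iUnion.2 ⟨n, lt_of_lt_of_le hpos (birkhoffSum_le_maxSum le_rfl hn1 x)⟩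
  have hB1 : μ B = 1 := by
    rw [measure_congr h, measure_univ]
  have hU1 : μ (⋃ N, E N) = 1 :=
    le_antisymm prob_le_one (hB1 ▸ measure_mono hsub)
  have hgint : Integrable g μ := integrable_of_abs_bound hgm hgb
  have htend : Tendsto (fun N => ∫ x in E N, g x ∂μ) atTop (𝓝 (∫ x in ⋃ N, E N, g x ∂μ)) :=
    tendsto_setIntegral_of_monotone hEm hEmono hgint.integrableOn
  have hge : 0 ≤ ∫ x in ⋃ N, E N, g x ∂μ :=
    ge_of_tendsto' htend (fun N => maximal_inequality herg.toMeasurePreserving hgm hgb N)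
  have hUeq : ∫ x in ⋃ N, E N, g x ∂μ = ∫ x, g x ∂μ := by
    have hcompl : μ (⋃ N, E N)ᶜ = 0 := by
      rw [measure_compl (MeasurableSet.iUnion hEm) (measure_ne_top μ _), hU1, measure_univ,
        tsub_self]
    rw [← integral_add_compl (MeasurableSet.iUnion hEm) hgint,
      Measure.restrict_eq_zero.2 hcompl]
    simp
  have hfint : Integrable f μ :=
    integrable_of_abs_bound hfm (C := 1) (fun x => abs_le.2 ⟨by linarith [hf0 x], hf1 x⟩)
  have hgval : ∫ x, g x ∂μ = lam - ∫ y, f y ∂μ := by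
    simp only [hgdef]
    rw [integral_sub (integrable_const lam) hfint, integral_const]
    simp
  rw [hUeq, hgval] at hge
  linarith

lemma ergodic_ae_le_liminf {μ : Measure α} [IsProbabilityMeasure μ] {T : α → α}
    (herg : Ergodic T μ) {f : α → ℝ} (hfm : Measurable f)
    (hf0 : ∀ x, 0 ≤ f x) (hf1 : ∀ x, f x ≤ 1) :
    ∀ᵐ x ∂μ, ∫ y, f y ∂μ ≤ liminf (fun n => birkhoffSum T f n x / n) atTop := by
  set I := ∫ y, f y ∂μ with hI
  set L : α → ℝ := fun x => liminf (fun n => birkhoffSum T f n x / n) atTop with hLdef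
  rw [ae_iff]
  have hsub : {x | ¬ I ≤ L x} ⊆ ⋃ q : ℚ, {x | L x < (q:ℝ) ∧ (q:ℝ) < I} := by
    intro x hx
    simp only [Set.mem_setOf_eq, not_le] at hx
    obtain ⟨q, hq1, hq2⟩ := exists_rat_btwn hx
    exact Set.mem_iUnion.2 ⟨q, hq1, hq2⟩
  refine measure_mono_null hsub (measure_iUnion_null fun q => ?_)
  by_cases hq : (q:ℝ) < I
  · refine measure_mono_null (fun x hx => hx.1) ?_
    exact ergodic_liminf_lt_null herg hfm hf0 hf1 hq
  · have : {x | L x < (q:ℝ) ∧ (q:ℝ) < I} = ∅ := by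
      ext x; simp only [Set.mem_setOf_eq, Set.mem_empty_iff_false, iff_false]
      rintro ⟨-, h2⟩; exact hq h2
    simp [this]

end birkhoff


namespace ErgNotAC

/-- indicator of the event `φ 0 = k` -/
noncomputable def ind (k : ℤ) : Conf → ℝ := fun φ => if φ 0 = k then 1 else 0

lemma ind_eq_indicator (k : ℤ) :
    ind k = Set.indicator {φ : Conf | φ 0 = k} (fun _ => (1:ℝ)) := by
  funext φ; simp [ind, Set.indicator_apply]

lemma measurableSet_ev (k : ℤ) : MeasurableSet {φ : Conf | φ 0 = k} := by
  have : {φ : Conf | φ 0 = k} = (fun φ : Conf => φ 0) ⁻¹' {k} := rfl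
  rw [this]
  exact (measurable_pi_apply 0) (MeasurableSet.singleton k)

lemma measurable_ind (k : ℤ) : Measurable (ind k) := by
  rw [ind_eq_indicator]
  exact (measurable_const).indicator (measurableSet_ev k)

lemma ind_nonneg (k : ℤ) (φ : Conf) : 0 ≤ ind k φ := by
  unfold ind; split_ifs <;> norm_num

lemma ind_le_one (k : ℤ) (φ : Conf) : ind k φ ≤ 1 := by
  unfold ind; split_ifs <;> norm_num

lemma sum_ind (J : Finset ℤ) (φ : Conf) :
    ∑ k ∈ J, ind k φ = if φ 0 ∈ J then 1 else 0 := by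
  simp [ind, Finset.sum_ite_eq J (φ 0) (fun _ => (1:ℝ))]

/-- the liminf empirical frequency of value `k` -/
noncomputable def L (k : ℤ) (φ : Conf) : ℝ :=
  liminf (fun n => birkhoffSum spatialShift (ind k) n φ / n) atTop

lemma measurable_L (k : ℤ) : Measurable (L k) := by
  have hS : Measurable spatialShift :=
    measurable_pi_lambda _ fun i => measurable_pi_apply (i + 1)
  exact Measurable.liminf (fun n => measurable_avg hS (measurable_ind k) n)

lemma L_heightShift (k t : ℤ) (φ : Conf) : L k (heightShift t φ) = L (k - t) φ := by
  unfold L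
  congr 1
  funext n
  congr 1
  unfold birkhoffSum
  refine Finset.sum_congr rfl fun i _ => ?_
  have h1 : (spatialShift^[i] (heightShift t φ)) 0 = φ (0 + i) + t := by
    rw [spatialShift_iterate]; rfl
  have h2 : (spatialShift^[i] φ) 0 = φ (0 + i) := spatialShift_iterate i φ 0
  unfold ind
  rw [h1, h2]
  by_cases h : φ (0 + i) = k - t
  · rw [if_pos (by omega), if_pos h]
  · rw [if_neg (by omega), if_neg h]

lemma sum_L_le_one (J : Finset ℤ) (φ : Conf) : ∑ k ∈ J, L k φ ≤ 1 := by
  classical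
  set F : Finset ℤ → Conf → ℝ := fun J y => ∑ k ∈ J, ind k y with hF
  have hF0 : ∀ J y, 0 ≤ F J y := fun J y =>
    Finset.sum_nonneg fun k _ => ind_nonneg k y
  have hF1 : ∀ J y, F J y ≤ 1 := fun J y => by
    rw [hF]; simp only; rw [sum_ind]; split_ifs <;> norm_num
  have key : ∀ J : Finset ℤ, ∑ k ∈ J, L k φ ≤
      liminf (fun n => birkhoffSum spatialShift (F J) n φ / n) atTop := by
    intro J
    induction J using Finset.induction with
    | empty =>
        simp only [Finset.sum_empty]
        have : (fun n => birkhoffSum spatialShift (F ∅) n φ / n) = fun _ => (0:ℝ) := by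
          funext n
          simp [hF, birkhoffSum]
        rw [this, liminf_const]
    | @insert a J ha ih =>
        rw [Finset.sum_insert ha]
        have hsplit : (fun n => birkhoffSum spatialShift (F (insert a J)) n φ / n)
            = fun n => birkhoffSum spatialShift (ind a) n φ / n
              + birkhoffSum spatialShift (F J) n φ / n := by
          funext n
          rw [← add_div]
          congr 1
          unfold birkhoffSum
          rw [← Finset.sum_add_distrib]
          refine Finset.sum_congr rfl fun i _ => ?_
          simp only [hF]
          rw [Finset.sum_insert ha]
        rw [hsplit]
        calc L a φ + ∑ k ∈ J, L k φ
            ≤ L a φ + liminf (fun n => birkhoffSum spatialShift (F J) n φ / n) atTop := by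
              linarith [ih]
          _ ≤ _ := liminf_add_liminf_le
              (fun n => avg_nonneg (ind_nonneg a) n φ)
              (fun n => avg_le_one (ind_nonneg a) (ind_le_one a) n φ)
              (fun n => avg_nonneg (hF0 J) n φ)
              (fun n => avg_le_one (hF0 J) (hF1 J) n φ)
  refine (key J).trans ?_
  have h1 : liminf (fun n => birkhoffSum spatialShift (F J) n φ / n) atTop
      ≤ liminf (fun _ : ℕ => (1:ℝ)) atTop := by
    refine liminf_le_liminf (Eventually.of_forall fun n => avg_le_one (hF0 J) (hF1 J) n φ)
      (bddge fun n => avg_nonneg (hF0 J) n φ) ?_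
    exact (bddle fun _ => le_refl (1:ℝ)).isCoboundedUnder_ge
  rw [liminf_const] at h1
  exact h1

end ErgNotAC


/-- If `ν` is a shift-invariant ergodic probability measure on `ℤ^ℤ` with `φ ↦ φ_0`
`ν`-integrable, then for every `t ≠ 0`, `ν` is not absolutely continuous with respect to
its height-shifted translate `ν_t = (T_t)_*ν`. -/
theorem ergodic_not_absolutelyContinuous_heightShift (ν : Measure Conf)
    [IsProbabilityMeasure ν] (herg : Ergodic spatialShift ν)
    (hint : Integrable (fun φ : Conf => (φ 0 : ℝ)) ν)
    (t : ℤ) (ht : t ≠ 0) :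
    ¬ ν ≪ ν.map (heightShift t) := by
  classical
  intro hac
  set m : ℤ → ENNReal := fun k => ν {φ : Conf | φ 0 = k} with hm
  have hmsum : ∑' k, m k = 1 := by
    have hdisj : Pairwise (Function.onFun Disjoint fun k : ℤ => {φ : Conf | φ 0 = k}) := by
      intro i j hij
      simp only [Function.onFun, Set.disjoint_left]
      rintro φ h1 h2
      exact hij ((h1 : φ 0 = i).symm.trans h2)
    have hiu := measure_iUnion (μ := ν) hdisj (fun k => ErgNotAC.measurableSet_ev k)
    have hU : ⋃ k : ℤ, {φ : Conf | φ 0 = k} = Set.univ := by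
      ext φ; simp
    rw [hU, measure_univ] at hiu
    exact hiu.symm
  set r : ℤ → ℝ := fun k => (m k).toReal with hr
  have hm_ne_top : ∀ k, m k ≠ ⊤ := fun k => measure_ne_top ν _
  have hrsum : Summable r := ENNReal.summable_toReal (by rw [hmsum]; exact ENNReal.one_ne_top)
  have hrtsum : ∑' k, r k = 1 := by
    calc ∑' k, (m k).toReal = (∑' k, m k).toReal := (ENNReal.tsum_toReal_eq hm_ne_top).symm
      _ = 1 := by rw [hmsum]; simp
  have hr0 : ∀ k, 0 ≤ r k := fun k => ENNReal.toReal_nonneg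
  have hIk : ∀ k, ∫ φ, ErgNotAC.ind k φ ∂ν = r k := by
    intro k
    rw [ErgNotAC.ind_eq_indicator, integral_indicator_const (1:ℝ) (ErgNotAC.measurableSet_ev k)]
    simp [hr, hm, measureReal_def]
  have hae : ∀ᵐ φ ∂ν, ∀ k : ℤ, r k ≤ ErgNotAC.L k φ := by
    rw [ae_all_iff]
    intro k
    have h := ergodic_ae_le_liminf herg (ErgNotAC.measurable_ind k)
      (ErgNotAC.ind_nonneg k) (ErgNotAC.ind_le_one k)
    rw [hIk k] at h
    exact h
  set A : Set Conf := {φ | ∀ k : ℤ, r k ≤ ErgNotAC.L k φ} with hA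
  have hAm : MeasurableSet A := by
    have hAeq : A = ⋂ k : ℤ, {φ | r k ≤ ErgNotAC.L k φ} := by ext φ; simp [hA]
    rw [hAeq]
    exact MeasurableSet.iInter fun k =>
      measurableSet_le measurable_const (ErgNotAC.measurable_L k)
  have hA1 : ν A = 1 := by
    refine (prob_compl_eq_zero_iff hAm).1 ?_
    rw [ae_iff] at hae
    have : Aᶜ = {φ | ¬ ∀ k : ℤ, r k ≤ ErgNotAC.L k φ} := by
      ext φ; simp [hA]
    rw [this]
    exact hae
  have hmap : ν.map (heightShift t) A = ν (heightShift t ⁻¹' A) :=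
    Measure.map_apply (measurable_heightShift t) hAm
  have hpre : ν (heightShift t ⁻¹' A) ≠ 0 := by
    intro h0
    have : ν A = 0 := hac (by rw [hmap]; exact h0)
    rw [hA1] at this
    exact one_ne_zero this
  have hinter : ν ((heightShift t ⁻¹' A) ∩ A) ≠ 0 := by
    intro h0
    have h1 : ν (heightShift t ⁻¹' A \ A) ≤ ν Aᶜ := measure_mono (fun x hx => hx.2)
    have h2 : ν Aᶜ = 0 := (prob_compl_eq_zero_iff hAm).2 hA1
    have h3 := measure_le_inter_add_diff ν (heightShift t ⁻¹' A) A
    rw [h0, zero_add] at h3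
    exact hpre (le_antisymm (h3.trans (h1.trans_eq h2)) (zero_le))
  obtain ⟨φ, hφpre, hφA⟩ := nonempty_of_measure_ne_zero hinter
  have hA' : ∀ j : ℤ, r j ≤ ErgNotAC.L j φ := hφA
  have hpre' : ∀ j : ℤ, r (j + t) ≤ ErgNotAC.L j φ := by
    intro j
    have h2 : r (j + t) ≤ ErgNotAC.L (j + t) (heightShift t φ) := hφpre (j + t)
    rwa [ErgNotAC.L_heightShift, add_sub_cancel_right] at h2
  set w : ℤ → ℝ := fun j => max (r j) (r (j + t)) with hw
  have hwJ : ∀ J : Finset ℤ, ∑ j ∈ J, w j ≤ 1 := by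
    intro J
    calc ∑ j ∈ J, w j ≤ ∑ j ∈ J, ErgNotAC.L j φ :=
          Finset.sum_le_sum fun j _ => max_le (hA' j) (hpre' j)
      _ ≤ 1 := ErgNotAC.sum_L_le_one J φ
  have hrshift_sum : Summable (fun j : ℤ => r (j + t)) :=
    ((Equiv.addRight t).summable_iff (f := r)).2 hrsum
  have hwsum : Summable w :=
    Summable.of_nonneg_of_le (fun j => le_max_of_le_left (hr0 j))
      (fun j => max_le (le_add_of_nonneg_right (hr0 (j + t)))
        (le_add_of_nonneg_left (hr0 j)))
      (hrsum.add hrshift_sum)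
  have hwt : ∑' j, w j ≤ 1 := Summable.tsum_le_of_sum_le hwsum hwJ
  have hwr : ∀ j, r j ≤ w j := fun j => le_max_left _ _
  have hwteq : ∑' j, w j = 1 :=
    le_antisymm hwt (hrtsum ▸ Summable.tsum_le_tsum hwr hrsum hwsum)
  have hweq : ∀ j, w j = r j := by
    intro j
    by_contra hne
    have hlt : r j < w j := lt_of_le_of_ne (hwr j) (Ne.symm hne)
    have h := Summable.tsum_lt_tsum hwr hlt hrsum hwsum
    rw [hrtsum, hwteq] at h
    exact lt_irrefl 1 h
  have hshift_le : ∀ j, r (j + t) ≤ r j := fun j => (le_max_right _ _).trans_eq (hweq j)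
  have hshift_tsum : ∑' j, r (j + t) = 1 := by
    have h := (Equiv.addRight t).tsum_eq r
    rw [show (fun j : ℤ => r ((Equiv.addRight t) j)) = fun j : ℤ => r (j + t) from rfl] at h
    rw [← hrtsum]
    exact h
  have hshift_eq : ∀ j, r (j + t) = r j := by
    intro j
    by_contra hne
    have hlt : r (j + t) < r j := lt_of_le_of_ne (hshift_le j) hne
    have h := Summable.tsum_lt_tsum hshift_le hlt hrshift_sum hrsum
    rw [hrtsum, hshift_tsum] at h
    exact lt_irrefl 1 h
  have hper : ∀ (n : ℕ) (j : ℤ), r (j + n * t) = r j := by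
    intro n
    induction n with
    | zero => intro j; simp
    | succ n ih =>
        intro j
        have hcast : (j : ℤ) + ((n:ℕ)+1 : ℕ) * t = (j + t) + (n:ℕ) * t := by
          push_cast; ring
        rw [hcast, ih (j + t), hshift_eq j]
  obtain ⟨j0, hj0⟩ : ∃ j0, r j0 ≠ 0 := by
    by_contra hall
    push_neg at hall
    have h0 : ∑' k, r k = 0 := by
      rw [show r = fun _ : ℤ => (0:ℝ) from funext hall]
      exact tsum_zero
    rw [hrtsum] at h0
    exact one_ne_zero h0
  have hj0pos : 0 < r j0 := lt_of_le_of_ne (hr0 j0) (Ne.symm hj0)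
  have hinj : Function.Injective (fun n : ℕ => j0 + (n : ℤ) * t) := by
    intro a b hab
    simp only at hab
    have h1 : (a : ℤ) * t = (b : ℤ) * t := by omega
    have h2 : (a : ℤ) = b := mul_right_cancel₀ ht h1
    exact_mod_cast h2
  have hcomp : Summable (r ∘ (fun n : ℕ => j0 + (n : ℤ) * t)) := hrsum.comp_injective hinj
  have hconst : (r ∘ (fun n : ℕ => j0 + (n : ℤ) * t)) = fun _ : ℕ => r j0 := by
    funext n
    exact hper n j0
  rw [hconst] at hcomp
  have : Finite ℕ := Finite.of_summable_const hj0pos hcomp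
  exact not_finite ℕ
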